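/- For any real numbers α, β with α + β > 2, α < 2, and β < 2, there exists a constant C such that for all n ∈ ℤ², the sum over all pairs (n₁, n₂) ∈ ℤ² × ℤ² with n₁ + n₂ = n of ⟨n₁⟩^(-α) ⟨n₂⟩^(-β) is at most C ⟨n⟩^(2 - α - β), where ⟨m⟩ = √(1 + |m|²). -/

import Mathlib

/-- Japanese bracket on the lattice ℤ²: ⟨n⟩ = √(1 + |n|²). -/
noncomputable def jap (n : ℤ × ℤ) : ℝ := Real.sqrt (1 + ((n.1 : ℝ)^2 + (n.2 : ℝ)^2))

namespace DCE

open Real Finset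

lemma concave_step {p x y : ℝ} (hp0 : 0 < p) (hp1 : p ≤ 1) (hy : 0 < y) (hxy : y ≤ x) :
    p * x ^ (p - 1) * (x - y) ≤ x ^ p - y ^ p := by
  have hx : 0 < x := lt_of_lt_of_le hy hxy
  have hs : -1 ≤ y / x - 1 := by
    have : 0 ≤ y / x := le_of_lt (div_pos hy hx)
    linarith
  have hb := rpow_one_add_le_one_add_mul_self hs hp0.le hp1
  rw [add_sub_cancel] at hb
  have hxp : (0:ℝ) < x ^ p := rpow_pos_of_pos hx p
  have hyx : (y / x) ^ p = y ^ p / x ^ p := div_rpow hy.le hx.le p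
  rw [hyx] at hb
  have hb2 : y ^ p ≤ x ^ p * (1 + p * (y / x - 1)) := by
    rw [div_le_iff₀ hxp] at hb
    linarith [hb]
  have hxp1 : x ^ (p - 1) = x ^ p / x := by
    rw [rpow_sub hx, rpow_one]
  rw [hxp1]
  have : x ^ p * (1 + p * (y / x - 1)) = x ^ p - p * (x ^ p / x) * (x - y) := by
    field_simp
    ring
  rw [this] at hb2
  linarith

lemma sum_pow_le {t : ℝ} (ht0 : 0 ≤ t) (ht1 : t < 1) (N : ℕ) :
    ∑ n ∈ Finset.Icc 1 N, (n : ℝ) ^ (-t) ≤ 2 / (1 - t) * (((N : ℝ) + 1) ^ (1 - t) - 1) := by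
  have h1t : 0 < 1 - t := by linarith
  induction N with
  | zero => simp
  | succ N ih =>
    rw [Finset.sum_Icc_succ_top (by omega : 1 ≤ N + 1)]
    have key : ((N : ℝ) + 1) ^ (-t) ≤ 2 / (1 - t) * (((N : ℝ) + 2) ^ (1 - t) - ((N : ℝ) + 1) ^ (1 - t)) := by
      have hstep := concave_step (p := 1 - t) (x := (N : ℝ) + 2) (y := (N : ℝ) + 1)
        h1t (by linarith) (by positivity) (by linarith)
      have hexp : (1 - t) - 1 = -t := by ring
      rw [hexp] at hstep
      have h2 : ((N : ℝ) + 1) ^ (-t) ≤ 2 * ((N : ℝ) + 2) ^ (-t) := by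
        have hle : ((N : ℝ) + 2) ^ (-t) ≥ (2 * ((N : ℝ) + 1)) ^ (-t) := by
          apply rpow_le_rpow_of_nonpos (by positivity) (by linarith) (by linarith)
        have : (2 * ((N : ℝ) + 1)) ^ (-t) = 2 ^ (-t) * ((N : ℝ) + 1) ^ (-t) :=
          mul_rpow (by norm_num) (by positivity)
        rw [this] at hle
        have h2t : (2:ℝ) ^ (-t) ≥ 2⁻¹ := by
          calc (2:ℝ) ^ (-t) ≥ 2 ^ (-1 : ℝ) := by
                apply rpow_le_rpow_of_exponent_le (by norm_num) (by linarith)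
            _ = 2⁻¹ := by
                rw [rpow_neg (by norm_num), rpow_one]
        nlinarith [rpow_pos_of_pos (by positivity : (0:ℝ) < (N:ℝ)+1) (-t),
          rpow_pos_of_pos (by positivity : (0:ℝ) < (N:ℝ)+2) (-t)]
      have hd : (N : ℝ) + 2 - ((N : ℝ) + 1) = 1 := by ring
      rw [hd, mul_one] at hstep
      have heq : 2 / (1 - t) * ((1 - t) * ((N : ℝ) + 2) ^ (-t)) = 2 * ((N : ℝ) + 2) ^ (-t) := by
        field_simp
      calc ((N : ℝ) + 1) ^ (-t) ≤ 2 * ((N : ℝ) + 2) ^ (-t) := h2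
        _ = 2 / (1 - t) * ((1 - t) * ((N : ℝ) + 2) ^ (-t)) := heq.symm
        _ ≤ 2 / (1 - t) * (((N : ℝ) + 2) ^ (1 - t) - ((N : ℝ) + 1) ^ (1 - t)) := by
            apply mul_le_mul_of_nonneg_left _ (by positivity)
            linarith [hstep]
    have hc : ((N : ℝ) + 1 + 1) = (N : ℝ) + 2 := by ring
    push_cast
    rw [hc]
    push_cast at ih key
    linarith

lemma tail_step {t : ℝ} (ht : 1 < t) {n : ℕ} (hn : 2 ≤ n) :
    min 1 (t - 1) * (n : ℝ) ^ (-t) ≤ ((n : ℝ) - 1) ^ (1 - t) - (n : ℝ) ^ (1 - t) := by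
  set q : ℝ := t - 1 with hq
  have hq0 : 0 < q := by simp only [hq]; linarith
  have hm : (2:ℝ) ≤ (n : ℝ) := by exact_mod_cast hn
  set m : ℝ := (n : ℝ) with hmm
  have ha : (1:ℝ) ≤ m - 1 := by linarith
  have ha0 : (0:ℝ) < m - 1 := by linarith
  have hm0 : (0:ℝ) < m := by linarith
  set A : ℝ := (m - 1) ^ q with hAdef
  set M : ℝ := m ^ q with hMdef
  have hA : (0:ℝ) < A := rpow_pos_of_pos ha0 q
  have hM : (0:ℝ) < M := rpow_pos_of_pos hm0 q
  have hAM : A ≤ M := rpow_le_rpow ha0.le (by linarith) hq0.le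
  have hrw : (m - 1) ^ (1 - t) - m ^ (1 - t) = (M - A) / (A * M) := by
    have h1 : (1 : ℝ) - t = -q := by rw [hq]; ring
    rw [h1, rpow_neg ha0.le, rpow_neg hm0.le, hAdef, hMdef]
    field_simp
  have hqt : M * m = m ^ t := by
    rw [hMdef]
    nth_rewrite 2 [← Real.rpow_one m]
    rw [← Real.rpow_add hm0]
    norm_num [hq]
  have hmt : m ^ (-t) = 1 / (M * m) := by
    rw [hqt, rpow_neg hm0.le, one_div]
  have hkey : min 1 q * M ≤ (M - A) * m := by
    rcases le_or_gt q 1 with hq1 | hq1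
    · have hstep := concave_step (p := q) hq0 hq1 ha0 (by linarith : m - 1 ≤ m)
      have hd : m - (m - 1) = 1 := by ring
      rw [hd, mul_one] at hstep
      have hq1' : m ^ (q - 1) = M / m := by rw [rpow_sub hm0, rpow_one, hMdef]
      rw [hq1'] at hstep
      -- q * (M/m) ≤ M - A
      have : min 1 q ≤ q := min_le_right _ _
      have h3 : q * (M / m) * m = q * M := by field_simp
      nlinarith [hstep, hM, hm0]
    · have hratio : ((m - 1) / m) ^ q ≤ (m - 1) / m := by
        nth_rewrite 2 [← Real.rpow_one ((m-1)/m)]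
        apply rpow_le_rpow_of_exponent_ge (by positivity)
          (by rw [div_le_one hm0]; linarith) (by linarith)
      have hArw : A = ((m - 1) / m) ^ q * M := by
        rw [hAdef, hMdef, ← mul_rpow (by positivity) hm0.le, div_mul_cancel₀]
        exact ne_of_gt hm0
      have hmin : min 1 q ≤ 1 := min_le_left _ _
      have h4 : A ≤ (m - 1) / m * M := by
        rw [hArw]
        exact mul_le_mul_of_nonneg_right hratio hM.le
      have h5 : (m - 1) / m * M * m = (m - 1) * M := by field_simp
      nlinarith [hM, hm0]
  rw [hrw, hmt]
  rw [mul_one_div, div_le_div_iff₀ (by positivity) (by positivity)]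
  have hmin0 : 0 ≤ (1 ⊓ q) := le_min zero_le_one hq0.le
  have h1 : (1 ⊓ q) * M * M ≤ (M - A) * m * M := mul_le_mul_of_nonneg_right hkey hM.le
  have h2 : (1 ⊓ q) * (A * M) ≤ (1 ⊓ q) * (M * M) := by
    apply mul_le_mul_of_nonneg_left _ hmin0
    nlinarith [hAM, hA, hM]
  nlinarith [h1, h2]


lemma sum_tail_aux {t : ℝ} (ht : 1 < t) {N : ℕ} (hN : 1 ≤ N) (M : ℕ) :
    ∑ n ∈ Finset.Icc (N + 1) M, (n : ℝ) ^ (-t) ≤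
      1 / min 1 (t - 1) * ((N : ℝ) ^ (1 - t) - ((max M N : ℕ) : ℝ) ^ (1 - t)) := by
  have hc : 0 < min 1 (t - 1) := lt_min one_pos (by linarith)
  induction M with
  | zero =>
    rw [Finset.Icc_eq_empty (by omega), Nat.max_eq_right (Nat.zero_le N)]
    simp
  | succ M ih =>
    rcases le_or_gt N M with hNM | hNM
    · rw [Finset.sum_Icc_succ_top (by omega : N + 1 ≤ M + 1)]
      rw [Nat.max_eq_left hNM] at ih
      have hMN1 : max (M + 1) N = M + 1 := Nat.max_eq_left (by omega)
      rw [hMN1]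
      have hts := tail_step ht (n := M + 1) (by omega)
      have hM1 : ((M + 1 : ℕ) : ℝ) = (M : ℝ) + 1 := by push_cast; ring
      have hterm : ((M + 1 : ℕ) : ℝ) ^ (-t) ≤
          1 / min 1 (t - 1) * ((M : ℝ) ^ (1 - t) - ((M : ℝ) + 1) ^ (1 - t)) := by
        rw [hM1]
        rw [hM1] at hts
        have h2 : ((M : ℝ) + 1) - 1 = (M : ℝ) := by ring
        rw [h2] at hts
        have h3 := mul_le_mul_of_nonneg_left hts (by positivity : (0:ℝ) ≤ 1 / min 1 (t - 1))
        rw [← mul_assoc, one_div_mul_cancel (ne_of_gt hc), one_mul] at h3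
        exact h3
      push_cast at ih hterm ⊢
      linarith
    · rw [Finset.Icc_eq_empty (by omega), Nat.max_eq_right (by omega : M + 1 ≤ N)]
      simp

lemma sum_tail_le {t : ℝ} (ht : 1 < t) {N : ℕ} (hN : 1 ≤ N) (K : ℕ) :
    ∑ n ∈ Finset.Icc N K, (n : ℝ) ^ (-t) ≤ (1 + 1 / min 1 (t - 1)) * (N : ℝ) ^ (1 - t) := by
  have hc : 0 < min 1 (t - 1) := lt_min one_pos (by linarith)
  have hN0 : (0:ℝ) < (N : ℝ) := by exact_mod_cast hN
  have hN1 : (1:ℝ) ≤ (N : ℝ) := by exact_mod_cast hN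
  have hNt : (N : ℝ) ^ (-t) ≤ (N : ℝ) ^ (1 - t) :=
    rpow_le_rpow_of_exponent_le hN1 (by linarith)
  have hpos : (0:ℝ) ≤ (N : ℝ) ^ (1 - t) := rpow_nonneg hN0.le _
  rcases le_or_gt N K with hNK | hNK
  · rw [Finset.Icc_eq_cons_Ioc hNK, Finset.sum_cons, ← Finset.Icc_add_one_left_eq_Ioc]
    have haux := sum_tail_aux ht hN K
    have hmax : (0:ℝ) ≤ ((max K N : ℕ) : ℝ) ^ (1 - t) := rpow_nonneg (by positivity) _
    have h1c : (0:ℝ) ≤ 1 / min 1 (t - 1) := by positivity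
    nlinarith [haux, hNt, hpos]
  · rw [Finset.Icc_eq_empty (by omega)]
    simp
    positivity

lemma tsum_nat_tail {t : ℝ} (ht : 1 < t) {N : ℕ} (hN : 1 ≤ N) :
    ∑' n : ℕ, (if N ≤ n then ENNReal.ofReal ((n : ℝ) ^ (-t)) else 0) ≤
      ENNReal.ofReal ((1 + 1 / min 1 (t - 1)) * (N : ℝ) ^ (1 - t)) := by
  rw [ENNReal.tsum_eq_iSup_sum]
  apply iSup_le
  intro F
  set f : ℕ → ENNReal := fun n => if N ≤ n then ENNReal.ofReal ((n : ℝ) ^ (-t)) else 0 with hf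
  have h1 : ∑ n ∈ F, f n = ∑ n ∈ F.filter (fun n => N ≤ n), f n := by
    rw [Finset.sum_filter_of_ne]
    intro x _ hx
    by_contra hc
    exact hx (if_neg hc)
  have h2 : F.filter (fun n => N ≤ n) ⊆ Finset.Icc N (F.sup id) := by
    intro x hx
    rw [Finset.mem_filter] at hx
    rw [Finset.mem_Icc]
    exact ⟨hx.2, Finset.le_sup (f := id) hx.1⟩
  calc ∑ n ∈ F, f n = ∑ n ∈ F.filter (fun n => N ≤ n), f n := h1
    _ ≤ ∑ n ∈ Finset.Icc N (F.sup id), f n := Finset.sum_le_sum_of_subset h2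
    _ ≤ ∑ n ∈ Finset.Icc N (F.sup id), ENNReal.ofReal ((n : ℝ) ^ (-t)) := by
        apply Finset.sum_le_sum
        intro i _
        simp only [hf]
        split
        · exact le_rfl
        · exact zero_le
    _ = ENNReal.ofReal (∑ n ∈ Finset.Icc N (F.sup id), (n : ℝ) ^ (-t)) := by
        rw [ENNReal.ofReal_sum_of_nonneg]
        intro i _
        exact rpow_nonneg (Nat.cast_nonneg i) _
    _ ≤ ENNReal.ofReal ((1 + 1 / min 1 (t - 1)) * (N : ℝ) ^ (1 - t)) :=
        ENNReal.ofReal_le_ofReal (sum_tail_le ht hN _)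

lemma tsum_nat_ball {t r : ℝ} (ht0 : 0 ≤ t) (ht1 : t < 1) (hr : 1 ≤ r) :
    ∑' n : ℕ, (if (n : ℝ) ≤ r then ENNReal.ofReal ((max 1 (n : ℝ)) ^ (-t)) else 0) ≤
      ENNReal.ofReal ((1 + 4 / (1 - t)) * r ^ (1 - t)) := by
  have hr0 : (0:ℝ) < r := by linarith
  set N : ℕ := ⌊r⌋₊ with hNdef
  have hN1 : 1 ≤ N := Nat.le_floor (by exact_mod_cast hr)
  have hfloor : (N : ℝ) ≤ r := Nat.floor_le hr0.le
  rw [tsum_eq_sum (s := Finset.range (N + 1)) ?h0]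
  case h0 =>
    intro n hn
    rw [Finset.mem_range, not_lt] at hn
    have : r < (n : ℝ) := (Nat.floor_lt hr0.le).mp (by omega)
    exact if_neg (not_le.mpr this)
  have hcond : ∀ n ∈ Finset.range (N + 1), (n : ℝ) ≤ r := by
    intro n hn
    rw [Finset.mem_range, Nat.lt_succ_iff] at hn
    calc (n : ℝ) ≤ (N : ℝ) := by exact_mod_cast hn
      _ ≤ r := hfloor
  calc ∑ n ∈ Finset.range (N + 1), (if (n : ℝ) ≤ r then ENNReal.ofReal ((max 1 (n : ℝ)) ^ (-t)) else 0)
      = ∑ n ∈ Finset.range (N + 1), ENNReal.ofReal ((max 1 (n : ℝ)) ^ (-t)) := by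
        apply Finset.sum_congr rfl
        intro n hn
        exact if_pos (hcond n hn)
    _ = ENNReal.ofReal (∑ n ∈ Finset.range (N + 1), (max 1 (n : ℝ)) ^ (-t)) := by
        rw [ENNReal.ofReal_sum_of_nonneg]
        intro i _
        exact rpow_nonneg (by positivity) _
    _ ≤ ENNReal.ofReal ((1 + 4 / (1 - t)) * r ^ (1 - t)) := by
        apply ENNReal.ofReal_le_ofReal
        have hins : Finset.range (N + 1) = insert 0 (Finset.Icc 1 N) := by
          ext x
          simp [Nat.lt_succ_iff]
          omega
        rw [hins, Finset.sum_insert (by simp)]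
        have h0 : (max 1 ((0:ℕ) : ℝ)) ^ (-t) = 1 := by
          norm_num
        rw [h0]
        have hcong : ∑ n ∈ Finset.Icc 1 N, (max 1 (n : ℝ)) ^ (-t)
            = ∑ n ∈ Finset.Icc 1 N, (n : ℝ) ^ (-t) := by
          apply Finset.sum_congr rfl
          intro n hn
          rw [Finset.mem_Icc] at hn
          rw [max_eq_right (by exact_mod_cast hn.1)]
        rw [hcong]
        have hsum := sum_pow_le ht0 ht1 N
        have h1t : 0 < 1 - t := by linarith
        have hone : (1:ℝ) ≤ r ^ (1 - t) := by
          calc (1:ℝ) = r ^ (0:ℝ) := (rpow_zero r).symm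
            _ ≤ r ^ (1 - t) := rpow_le_rpow_of_exponent_le hr (by linarith)
        have hNr : ((N : ℝ) + 1) ^ (1 - t) ≤ 2 * r ^ (1 - t) := by
          calc ((N : ℝ) + 1) ^ (1 - t) ≤ (2 * r) ^ (1 - t) :=
                rpow_le_rpow (by positivity) (by linarith) h1t.le
            _ = 2 ^ (1 - t) * r ^ (1 - t) := mul_rpow (by norm_num) hr0.le
            _ ≤ 2 * r ^ (1 - t) := by
                apply mul_le_mul_of_nonneg_right _ (rpow_nonneg hr0.le _)
                calc (2:ℝ) ^ (1 - t) ≤ 2 ^ (1:ℝ) :=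
                      rpow_le_rpow_of_exponent_le one_le_two (by linarith)
                  _ = 2 := rpow_one 2
        have hd0 : (0:ℝ) ≤ 2 / (1 - t) := by positivity
        have hmul : 2 / (1 - t) * (((N : ℝ) + 1) ^ (1 - t) - 1) ≤ 2 / (1 - t) * (2 * r ^ (1 - t)) := by
          apply mul_le_mul_of_nonneg_left _ hd0
          linarith
        have hring : 2 / (1 - t) * (2 * r ^ (1 - t)) = 4 / (1 - t) * r ^ (1 - t) := by
          ring
        nlinarith [hsum, hmul, hone]


noncomputable def J (a : ℤ) : ℝ := max 1 |(a : ℝ)|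

lemma one_le_J (a : ℤ) : 1 ≤ J a := le_max_left _ _
lemma J_pos (a : ℤ) : 0 < J a := lt_of_lt_of_le one_pos (one_le_J a)
lemma J_neg (a : ℤ) : J (-a) = J a := by simp [J]
lemma abs_le_J (a : ℤ) : |(a : ℝ)| ≤ J a := le_max_right _ _
lemma J_natCast (n : ℕ) : J (n : ℤ) = max 1 (n : ℝ) := by
  simp [J, Nat.abs_cast]

lemma tsum_int_le_two_mul (g : ℤ → ENNReal) (hg : ∀ a, g (-a) = g a) :
    ∑' a : ℤ, g a ≤ 2 * ∑' n : ℕ, g (n : ℤ) := by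
  set ψ : Bool × ℕ → ℤ := fun p => if p.1 then (p.2 : ℤ) else -(p.2 : ℤ) with hψ
  have hsurj : Function.Surjective ψ := by
    intro z
    rcases le_or_gt 0 z with hz | hz
    · exact ⟨(true, z.toNat), by simp [hψ, Int.toNat_of_nonneg hz]⟩
    · refine ⟨(false, (-z).toNat), ?_⟩
      simp [hψ, Int.toNat_of_nonneg (by omega : (0:ℤ) ≤ -z)]
  calc ∑' a : ℤ, g a ≤ ∑' p : Bool × ℕ, g (ψ p) :=
        ENNReal.tsum_le_tsum_comp_of_surjective hsurj g
    _ = ∑' b : Bool, ∑' n : ℕ, g (ψ (b, n)) := ENNReal.tsum_prod'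
    _ = (∑' n : ℕ, g (ψ (false, n))) + ∑' n : ℕ, g (ψ (true, n)) := tsum_bool _
    _ = (∑' n : ℕ, g (n : ℤ)) + ∑' n : ℕ, g (n : ℤ) := by
        have e1 : ∑' n : ℕ, g (ψ (false, n)) = ∑' n : ℕ, g (n : ℤ) :=
          tsum_congr fun n => by
            show g (if false then (n : ℤ) else -(n : ℤ)) = g (n : ℤ)
            rw [if_neg (by simp)]
            exact hg n
        have e2 : ∑' n : ℕ, g (ψ (true, n)) = ∑' n : ℕ, g (n : ℤ) :=
          tsum_congr fun n => by
            show g (if true then (n : ℤ) else -(n : ℤ)) = g (n : ℤ)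
            rw [if_pos rfl]
        rw [e1, e2]
    _ = 2 * ∑' n : ℕ, g (n : ℤ) := (two_mul _).symm

lemma tsum_int_ball {t r : ℝ} (ht0 : 0 ≤ t) (ht1 : t < 1) (hr : 1 ≤ r) :
    ∑' a : ℤ, ENNReal.ofReal (if J a ≤ r then (J a) ^ (-t) else 0) ≤
      ENNReal.ofReal ((2 + 8 / (1 - t)) * r ^ (1 - t)) := by
  have heven : ∀ a : ℤ, ENNReal.ofReal (if J (-a) ≤ r then (J (-a)) ^ (-t) else 0)
      = ENNReal.ofReal (if J a ≤ r then (J a) ^ (-t) else 0) := by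
    intro a; rw [J_neg]
  calc ∑' a : ℤ, ENNReal.ofReal (if J a ≤ r then (J a) ^ (-t) else 0)
      ≤ 2 * ∑' n : ℕ, ENNReal.ofReal (if J (n : ℤ) ≤ r then (J (n : ℤ)) ^ (-t) else 0) :=
        tsum_int_le_two_mul _ heven
    _ = 2 * ∑' n : ℕ, (if (n : ℝ) ≤ r then ENNReal.ofReal ((max 1 (n : ℝ)) ^ (-t)) else 0) := by
        congr 1
        apply tsum_congr
        intro n
        rw [J_natCast]
        rcases le_or_gt (max 1 (n : ℝ)) r with h | h
        · rw [if_pos h, if_pos (le_trans (le_max_right 1 _) h)]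
        · rw [if_neg (not_le.mpr h), if_neg (by
            intro hc
            exact absurd (max_le hr hc) (not_le.mpr h)), ENNReal.ofReal_zero]
    _ ≤ 2 * ENNReal.ofReal ((1 + 4 / (1 - t)) * r ^ (1 - t)) := by
        exact mul_le_mul_right (tsum_nat_ball ht0 ht1 hr) 2
    _ = ENNReal.ofReal ((2 + 8 / (1 - t)) * r ^ (1 - t)) := by
        rw [← ENNReal.ofReal_ofNat 2, ← ENNReal.ofReal_mul (by norm_num)]
        congr 1
        ring

lemma tsum_int_tail {t s : ℝ} (ht : 1 < t) (hs : 0 < s) :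
    ∑' a : ℤ, ENNReal.ofReal (if s ≤ J a then (J a) ^ (-t) else 0) ≤
      ENNReal.ofReal (2 * (2 + 1 / min 1 (t - 1)) * s ^ (1 - t)) := by
  have hc : 0 < min 1 (t - 1) := lt_min one_pos (by linarith)
  have heven : ∀ a : ℤ, ENNReal.ofReal (if s ≤ J (-a) then (J (-a)) ^ (-t) else 0)
      = ENNReal.ofReal (if s ≤ J a then (J a) ^ (-t) else 0) := by
    intro a; rw [J_neg]
  have hmain : ∑' n : ℕ, ENNReal.ofReal (if s ≤ J (n : ℤ) then (J (n : ℤ)) ^ (-t) else 0)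
      ≤ ENNReal.ofReal ((2 + 1 / min 1 (t - 1)) * s ^ (1 - t)) := by
    rcases le_or_gt s 1 with hs1 | hs1
    · -- s ≤ 1 : bound by the full sum
      have hpt : ∀ n : ℕ, ENNReal.ofReal (if s ≤ J (n : ℤ) then (J (n : ℤ)) ^ (-t) else 0)
          ≤ (if n = 0 then ENNReal.ofReal 1 else 0)
            + (if 1 ≤ n then ENNReal.ofReal ((n : ℝ) ^ (-t)) else 0) := by
        intro n
        rcases Nat.eq_zero_or_pos n with rfl | hn
        · simp only [if_pos rfl]
          apply le_add_of_le_of_nonneg _ (zero_le)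
          apply ENNReal.ofReal_le_ofReal
          split
          · rw [J_natCast]; norm_num
          · norm_num
        · have hJ : J (n : ℤ) = (n : ℝ) := by
            rw [J_natCast, max_eq_right (by exact_mod_cast hn)]
          rw [hJ, if_neg (show ¬ n = 0 by omega), if_pos (show 1 ≤ n by omega), zero_add]
          apply ENNReal.ofReal_le_ofReal
          split
          · exact le_rfl
          · exact rpow_nonneg (Nat.cast_nonneg n) _
      calc ∑' n : ℕ, ENNReal.ofReal (if s ≤ J (n : ℤ) then (J (n : ℤ)) ^ (-t) else 0)
          ≤ ∑' n : ℕ, ((if n = 0 then ENNReal.ofReal 1 else 0)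
              + (if 1 ≤ n then ENNReal.ofReal ((n : ℝ) ^ (-t)) else 0)) :=
            ENNReal.tsum_le_tsum hpt
        _ = (∑' n : ℕ, if n = 0 then ENNReal.ofReal 1 else 0)
              + ∑' n : ℕ, (if 1 ≤ n then ENNReal.ofReal ((n : ℝ) ^ (-t)) else 0) :=
            ENNReal.tsum_add
        _ ≤ ENNReal.ofReal 1 + ENNReal.ofReal ((1 + 1 / min 1 (t - 1)) * (1 : ℝ) ^ (1 - t)) := by
            apply add_le_add
            · rw [tsum_eq_single 0 (by intro b hb; rw [if_neg hb])]
              simp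
            · have := tsum_nat_tail ht (N := 1) le_rfl
              simpa using this
        _ ≤ ENNReal.ofReal ((2 + 1 / min 1 (t - 1)) * s ^ (1 - t)) := by
            rw [← ENNReal.ofReal_add (by norm_num) (by positivity)]
            apply ENNReal.ofReal_le_ofReal
            have hsp : (1:ℝ) ≤ s ^ (1 - t) := by
              apply Real.one_le_rpow_of_pos_of_le_one_of_nonpos hs hs1 (by linarith)
            rw [Real.one_rpow, mul_one]
            have h5 : (2 + 1 / min 1 (t - 1)) * 1 ≤ (2 + 1 / min 1 (t - 1)) * s ^ (1 - t) :=
              mul_le_mul_of_nonneg_left hsp (by positivity)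
            linarith
    · -- 1 < s
      set N : ℕ := ⌈s⌉₊ with hNdef
      have hN1 : 1 ≤ N := Nat.one_le_ceil_iff.mpr hs
      have hsN : s ≤ (N : ℝ) := Nat.le_ceil s
      have hpt : ∀ n : ℕ, ENNReal.ofReal (if s ≤ J (n : ℤ) then (J (n : ℤ)) ^ (-t) else 0)
          ≤ (if N ≤ n then ENNReal.ofReal ((n : ℝ) ^ (-t)) else 0) := by
        intro n
        rcases le_or_gt s (J (n : ℤ)) with h | h
        · rw [if_pos h]
          rcases Nat.eq_zero_or_pos n with rfl | hn
          · exfalso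
            rw [J_natCast] at h
            norm_num at h
            linarith
          · have hJ : J (n : ℤ) = (n : ℝ) := by
              rw [J_natCast, max_eq_right (by exact_mod_cast hn)]
            rw [hJ] at h ⊢
            rw [if_pos (Nat.ceil_le.mpr h)]
        · rw [if_neg (not_le.mpr h), ENNReal.ofReal_zero]
          exact zero_le
      calc ∑' n : ℕ, ENNReal.ofReal (if s ≤ J (n : ℤ) then (J (n : ℤ)) ^ (-t) else 0)
          ≤ ∑' n : ℕ, (if N ≤ n then ENNReal.ofReal ((n : ℝ) ^ (-t)) else 0) :=
            ENNReal.tsum_le_tsum hpt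
        _ ≤ ENNReal.ofReal ((1 + 1 / min 1 (t - 1)) * (N : ℝ) ^ (1 - t)) := tsum_nat_tail ht hN1
        _ ≤ ENNReal.ofReal ((2 + 1 / min 1 (t - 1)) * s ^ (1 - t)) := by
            apply ENNReal.ofReal_le_ofReal
            have hNs : (N : ℝ) ^ (1 - t) ≤ s ^ (1 - t) :=
              rpow_le_rpow_of_nonpos hs hsN (by linarith)
            have h1 : (0:ℝ) ≤ 1 + 1 / min 1 (t - 1) := by positivity
            have h2 : (0:ℝ) ≤ s ^ (1 - t) := rpow_nonneg hs.le _
            nlinarith [hNs]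
  calc ∑' a : ℤ, ENNReal.ofReal (if s ≤ J a then (J a) ^ (-t) else 0)
      ≤ 2 * ∑' n : ℕ, ENNReal.ofReal (if s ≤ J (n : ℤ) then (J (n : ℤ)) ^ (-t) else 0) :=
        tsum_int_le_two_mul _ heven
    _ ≤ 2 * ENNReal.ofReal ((2 + 1 / min 1 (t - 1)) * s ^ (1 - t)) := mul_le_mul_right hmain 2
    _ = ENNReal.ofReal (2 * (2 + 1 / min 1 (t - 1)) * s ^ (1 - t)) := by
        rw [← ENNReal.ofReal_ofNat 2, ← ENNReal.ofReal_mul (by norm_num), mul_assoc]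


lemma one_le_jap (m : ℤ × ℤ) : 1 ≤ jap m := by
  have h0 : (0:ℝ) ≤ (m.1:ℝ)^2 + (m.2:ℝ)^2 := by positivity
  calc (1:ℝ) = Real.sqrt 1 := Real.sqrt_one.symm
    _ ≤ Real.sqrt (1 + ((m.1:ℝ)^2 + (m.2:ℝ)^2)) := Real.sqrt_le_sqrt (by linarith)
    _ = jap m := rfl

lemma jap_pos (m : ℤ × ℤ) : 0 < jap m := lt_of_lt_of_le one_pos (one_le_jap m)

lemma jap_sq (m : ℤ × ℤ) : jap m * jap m = 1 + (((m.1 : ℝ))^2 + ((m.2 : ℝ))^2) := by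
  rw [jap]
  exact Real.mul_self_sqrt (by positivity)

lemma sqrt_le_two_mul {u v : ℝ} (hv : 0 ≤ v) (h : u ≤ 4 * v) :
    Real.sqrt u ≤ 2 * Real.sqrt v := by
  have h4 : (4:ℝ) * v = 2 ^ 2 * v := by norm_num
  calc Real.sqrt u ≤ Real.sqrt (2 ^ 2 * v) := Real.sqrt_le_sqrt (by linarith)
    _ = 2 * Real.sqrt v := by
        rw [Real.sqrt_mul (by norm_num), Real.sqrt_sq (by norm_num)]

lemma J_le_jap_fst (m : ℤ × ℤ) : J m.1 ≤ jap m := by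
  rw [J, jap]
  apply max_le
  · exact one_le_jap m
  · rw [← Real.sqrt_sq_eq_abs]
    apply Real.sqrt_le_sqrt
    nlinarith [sq_nonneg ((m.2 : ℝ))]

lemma J_le_jap_snd (m : ℤ × ℤ) : J m.2 ≤ jap m := by
  rw [J, jap]
  apply max_le
  · exact one_le_jap m
  · rw [← Real.sqrt_sq_eq_abs]
    apply Real.sqrt_le_sqrt
    nlinarith [sq_nonneg ((m.1 : ℝ))]

lemma jap_le_two_max (m : ℤ × ℤ) : jap m ≤ 2 * max (J m.1) (J m.2) := by
  set M : ℝ := max (J m.1) (J m.2) with hM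
  have h1 : 1 ≤ M := le_trans (one_le_J m.1) (le_max_left _ _)
  have ha : |(m.1 : ℝ)| ≤ M := le_trans (abs_le_J m.1) (le_max_left _ _)
  have hb : |(m.2 : ℝ)| ≤ M := le_trans (abs_le_J m.2) (le_max_right _ _)
  have hM0 : 0 ≤ M := by linarith
  have := sqrt_le_two_mul (v := M * M) (by positivity)
    (by nlinarith [abs_nonneg ((m.1:ℝ)), abs_nonneg ((m.2:ℝ)), sq_abs ((m.1:ℝ)), sq_abs ((m.2:ℝ))] :
      1 + (((m.1 : ℝ))^2 + ((m.2 : ℝ))^2) ≤ 4 * (M * M))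
  rw [Real.sqrt_mul_self hM0] at this
  exact this

lemma jap_add_le {x y : ℤ × ℤ} (h : jap x ≤ jap y) : jap (x + y) ≤ 2 * jap y := by
  have hx := jap_pos x
  have hy := jap_pos y
  have hsq : jap x * jap x ≤ jap y * jap y := mul_le_mul h h hx.le hy.le
  rw [jap_sq, jap_sq] at hsq
  have hfst : ((x + y).1 : ℝ) = (x.1 : ℝ) + (y.1 : ℝ) := by
    rw [Prod.fst_add]; push_cast; ring
  have hsnd : ((x + y).2 : ℝ) = (x.2 : ℝ) + (y.2 : ℝ) := by
    rw [Prod.snd_add]; push_cast; ring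
  have key : 1 + (((x + y).1 : ℝ)^2 + ((x + y).2 : ℝ)^2)
      ≤ 4 * (1 + ((y.1 : ℝ)^2 + (y.2 : ℝ)^2)) := by
    rw [hfst, hsnd]
    nlinarith [sq_nonneg ((x.1:ℝ) - (y.1:ℝ)), sq_nonneg ((x.2:ℝ) - (y.2:ℝ))]
  have h2 := sqrt_le_two_mul (by positivity) key
  calc jap (x + y) = Real.sqrt (1 + (((x + y).1 : ℝ)^2 + ((x + y).2 : ℝ)^2)) := rfl
    _ ≤ 2 * Real.sqrt (1 + ((y.1 : ℝ)^2 + (y.2 : ℝ)^2)) := h2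
    _ = 2 * jap y := rfl

lemma ball2 {t : ℝ} (ht0 : 0 ≤ t) (ht2 : t < 2) :
    ∃ C : ℝ, 0 ≤ C ∧ ∀ r : ℝ, 1 ≤ r →
      ∑' m : ℤ × ℤ, ENNReal.ofReal (if jap m ≤ r then (jap m) ^ (-t) else 0) ≤
        ENNReal.ofReal (C * r ^ (2 - t)) := by
  have ht2' : t / 2 < 1 := by linarith
  have ht0' : 0 ≤ t / 2 := by linarith
  set C1 : ℝ := 2 + 8 / (1 - t / 2) with hC1
  have hC1pos : 0 < C1 := by
    have : 0 < 1 - t / 2 := by linarith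
    positivity
  refine ⟨C1 * C1, by positivity, fun r hr => ?_⟩
  have hr0 : (0:ℝ) < r := by linarith
  set f : ℤ → ℝ := fun a => if J a ≤ r then (J a) ^ (-(t / 2)) else 0 with hf
  have hfnn : ∀ a, 0 ≤ f a := by
    intro a
    simp only [hf]
    split
    · exact rpow_nonneg (J_pos a).le _
    · exact le_rfl
  have hpt : ∀ m : ℤ × ℤ, ENNReal.ofReal (if jap m ≤ r then (jap m) ^ (-t) else 0) ≤
      ENNReal.ofReal (f m.1) * ENNReal.ofReal (f m.2) := by
    intro m
    rcases le_or_gt (jap m) r with h | h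
    · rw [if_pos h, ← ENNReal.ofReal_mul (hfnn m.1)]
      apply ENNReal.ofReal_le_ofReal
      have h1 : J m.1 ≤ r := le_trans (J_le_jap_fst m) h
      have h2 : J m.2 ≤ r := le_trans (J_le_jap_snd m) h
      rw [hf]
      simp only [if_pos h1, if_pos h2]
      have hsplit : (jap m) ^ (-t) = (jap m) ^ (-(t/2)) * (jap m) ^ (-(t/2)) := by
        rw [← Real.rpow_add (jap_pos m)]
        ring_nf
      rw [hsplit]
      apply mul_le_mul
      · exact rpow_le_rpow_of_nonpos (J_pos m.1) (J_le_jap_fst m) (by linarith)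
      · exact rpow_le_rpow_of_nonpos (J_pos m.2) (J_le_jap_snd m) (by linarith)
      · exact rpow_nonneg (jap_pos m).le _
      · exact rpow_nonneg (J_pos m.1).le _
    · rw [if_neg (not_le.mpr h), ENNReal.ofReal_zero]
      exact zero_le
  calc ∑' m : ℤ × ℤ, ENNReal.ofReal (if jap m ≤ r then (jap m) ^ (-t) else 0)
      ≤ ∑' m : ℤ × ℤ, ENNReal.ofReal (f m.1) * ENNReal.ofReal (f m.2) :=
        ENNReal.tsum_le_tsum hpt
    _ = ∑' a : ℤ, ∑' b : ℤ, ENNReal.ofReal (f a) * ENNReal.ofReal (f b) := ENNReal.tsum_prod'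
    _ = (∑' a : ℤ, ENNReal.ofReal (f a)) * (∑' b : ℤ, ENNReal.ofReal (f b)) := by
        rw [← ENNReal.tsum_mul_right]
        apply tsum_congr
        intro a
        rw [ENNReal.tsum_mul_left]
    _ ≤ ENNReal.ofReal (C1 * r ^ (1 - t / 2)) * ENNReal.ofReal (C1 * r ^ (1 - t / 2)) := by
        apply mul_le_mul' (tsum_int_ball ht0' ht2' hr) (tsum_int_ball ht0' ht2' hr)
    _ = ENNReal.ofReal ((C1 * C1) * r ^ (2 - t)) := by
        rw [← ENNReal.ofReal_mul (by positivity)]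
        congr 1
        have hexp : r ^ (1 - t / 2) * r ^ (1 - t / 2) = r ^ (2 - t) := by
          rw [← Real.rpow_add hr0]
          congr 1
          ring
        calc C1 * r ^ (1 - t / 2) * (C1 * r ^ (1 - t / 2))
            = C1 * C1 * (r ^ (1 - t / 2) * r ^ (1 - t / 2)) := by ring
          _ = C1 * C1 * r ^ (2 - t) := by rw [hexp]
  -- done

lemma tail2 {t : ℝ} (ht : 2 < t) :
    ∃ C : ℝ, 0 ≤ C ∧ ∀ s : ℝ, 0 < s →
      ∑' m : ℤ × ℤ, ENNReal.ofReal (if s ≤ jap m then (jap m) ^ (-t) else 0) ≤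
        ENNReal.ofReal (C * s ^ (2 - t)) := by
  have ht1 : 1 < t - 1 := by linarith
  set C0 : ℝ := 10 with hC0
  set C1 : ℝ := 2 * (2 + 1 / min 1 (t - 1 - 1)) with hC1def
  have hc : 0 < min 1 (t - 1 - 1) := lt_min one_pos (by linarith)
  have hC1pos : 0 < C1 := by positivity
  have hC0pos : (0:ℝ) < C0 := by norm_num [hC0]
  have h2t2 : (0:ℝ) < (2:ℝ) ^ (t - 2) := rpow_pos_of_pos two_pos _
  refine ⟨2 * (C0 * C1 * 2 ^ (t - 2)), by positivity, fun s hs => ?_⟩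
  set p1 : ℤ × ℤ → ℝ := fun m =>
    (if s / 2 ≤ J m.1 then (J m.1) ^ (-t) else 0) * (if J m.2 ≤ J m.1 then 1 else 0) with hp1
  set p2 : ℤ × ℤ → ℝ := fun m =>
    (if s / 2 ≤ J m.2 then (J m.2) ^ (-t) else 0) * (if J m.1 ≤ J m.2 then 1 else 0) with hp2
  have hq_nonneg : ∀ a : ℤ, 0 ≤ (if s / 2 ≤ J a then (J a) ^ (-t) else 0) := by
    intro a
    split
    · exact rpow_nonneg (J_pos a).le _
    · exact le_rfl
  have hind_nonneg : ∀ (a b : ℤ), (0:ℝ) ≤ (if J b ≤ J a then (1:ℝ) else 0) := by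
    intro a b
    split
    · norm_num
    · exact le_rfl
  -- bound for the generic half
  have half : ∑' m : ℤ × ℤ, ENNReal.ofReal (p1 m) ≤
      ENNReal.ofReal (C0 * C1 * 2 ^ (t - 2) * s ^ (2 - t)) := by
    have hinner : ∀ a : ℤ,
        ∑' b : ℤ, ENNReal.ofReal (if J b ≤ J a then (1:ℝ) else 0) ≤
          ENNReal.ofReal (C0 * (J a)) := by
      intro a
      have h0 := tsum_int_ball (t := 0) le_rfl one_pos (one_le_J a)
      simp only [neg_zero, Real.rpow_zero, sub_zero, Real.rpow_one] at h0
      calc ∑' b : ℤ, ENNReal.ofReal (if J b ≤ J a then (1:ℝ) else 0)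
          ≤ ENNReal.ofReal ((2 + 8 / 1) * J a) := h0
        _ = ENNReal.ofReal (C0 * J a) := by norm_num [hC0]
    calc ∑' m : ℤ × ℤ, ENNReal.ofReal (p1 m)
        = ∑' a : ℤ, ∑' b : ℤ, ENNReal.ofReal (p1 (a, b)) := ENNReal.tsum_prod'
      _ = ∑' a : ℤ, (ENNReal.ofReal (if s / 2 ≤ J a then (J a) ^ (-t) else 0)
            * ∑' b : ℤ, ENNReal.ofReal (if J b ≤ J a then (1:ℝ) else 0)) := by
          apply tsum_congr
          intro a
          rw [← ENNReal.tsum_mul_left]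
          apply tsum_congr
          intro b
          rw [hp1, ← ENNReal.ofReal_mul (hq_nonneg a)]
      _ ≤ ∑' a : ℤ, (ENNReal.ofReal (if s / 2 ≤ J a then (J a) ^ (-t) else 0)
            * ENNReal.ofReal (C0 * (J a))) := by
          apply ENNReal.tsum_le_tsum
          intro a
          exact mul_le_mul_right (hinner a) _
      _ = ∑' a : ℤ, ENNReal.ofReal (C0 * (if s / 2 ≤ J a then (J a) ^ (-(t-1)) else 0)) := by
          apply tsum_congr
          intro a
          rw [← ENNReal.ofReal_mul (hq_nonneg a)]
          congr 1
          split
          · rename_i h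
            have hJ : (J a) ^ (-t) * (J a) = (J a) ^ (-(t-1)) := by
              nth_rewrite 2 [← Real.rpow_one (J a)]
              rw [← Real.rpow_add (J_pos a)]
              ring_nf
            calc (J a) ^ (-t) * (C0 * J a) = ((J a) ^ (-t) * (J a)) * C0 := by ring
              _ = C0 * (J a) ^ (-(t-1)) := by rw [hJ]; ring
          · simp
      _ = ENNReal.ofReal C0 * ∑' a : ℤ, ENNReal.ofReal (if s / 2 ≤ J a then (J a) ^ (-(t-1)) else 0) := by
          rw [← ENNReal.tsum_mul_left]
          apply tsum_congr
          intro a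
          rw [ENNReal.ofReal_mul hC0pos.le]
      _ ≤ ENNReal.ofReal C0 * ENNReal.ofReal (C1 * (s / 2) ^ (1 - (t - 1))) := by
          apply mul_le_mul_right
          exact tsum_int_tail ht1 (by positivity)
      _ = ENNReal.ofReal (C0 * C1 * 2 ^ (t - 2) * s ^ (2 - t)) := by
          rw [← ENNReal.ofReal_mul hC0pos.le]
          congr 1
          have h1 : (1:ℝ) - (t - 1) = 2 - t := by ring
          rw [h1]
          have h2 : (s / 2) ^ ((2:ℝ) - t) = 2 ^ (t - 2) * s ^ (2 - t) := by
            rw [div_rpow hs.le (by norm_num : (0:ℝ) ≤ 2)]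
            rw [div_eq_mul_inv, ← Real.rpow_neg (by norm_num : (0:ℝ) ≤ 2), neg_sub]
            ring
          rw [h2]
          ring
  -- pointwise bound
  have hpt : ∀ m : ℤ × ℤ, ENNReal.ofReal (if s ≤ jap m then (jap m) ^ (-t) else 0) ≤
      ENNReal.ofReal (p1 m) + ENNReal.ofReal (p2 m) := by
    intro m
    rcases le_or_gt s (jap m) with h | h
    · rw [if_pos h]
      rcases le_total (J m.2) (J m.1) with hJ | hJ
      · apply le_add_of_le_of_nonneg _ (zero_le)
        apply ENNReal.ofReal_le_ofReal
        have hmax : max (J m.1) (J m.2) = J m.1 := max_eq_left hJ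
        have hs2 : s / 2 ≤ J m.1 := by
          have := jap_le_two_max m
          rw [hmax] at this
          linarith
        rw [hp1]
        simp only [if_pos hs2, if_pos hJ, mul_one]
        exact rpow_le_rpow_of_nonpos (J_pos m.1) (J_le_jap_fst m) (by linarith)
      · apply le_add_of_nonneg_of_le (zero_le)
        apply ENNReal.ofReal_le_ofReal
        have hmax : max (J m.1) (J m.2) = J m.2 := max_eq_right hJ
        have hs2 : s / 2 ≤ J m.2 := by
          have := jap_le_two_max m
          rw [hmax] at this
          linarith
        rw [hp2]
        simp only [if_pos hs2, if_pos hJ, mul_one]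
        exact rpow_le_rpow_of_nonpos (J_pos m.2) (J_le_jap_snd m) (by linarith)
    · rw [if_neg (not_le.mpr h), ENNReal.ofReal_zero]
      exact zero_le
  have hswap : ∑' m : ℤ × ℤ, ENNReal.ofReal (p2 m) = ∑' m : ℤ × ℤ, ENNReal.ofReal (p1 m) := by
    rw [← (Equiv.prodComm ℤ ℤ).tsum_eq (fun m : ℤ × ℤ => ENNReal.ofReal (p1 m))]
    apply tsum_congr
    intro m
    rfl
  calc ∑' m : ℤ × ℤ, ENNReal.ofReal (if s ≤ jap m then (jap m) ^ (-t) else 0)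
      ≤ ∑' m : ℤ × ℤ, (ENNReal.ofReal (p1 m) + ENNReal.ofReal (p2 m)) :=
        ENNReal.tsum_le_tsum hpt
    _ = (∑' m : ℤ × ℤ, ENNReal.ofReal (p1 m)) + ∑' m : ℤ × ℤ, ENNReal.ofReal (p2 m) :=
        ENNReal.tsum_add
    _ = (∑' m : ℤ × ℤ, ENNReal.ofReal (p1 m)) + ∑' m : ℤ × ℤ, ENNReal.ofReal (p1 m) := by
        rw [hswap]
    _ ≤ ENNReal.ofReal (C0 * C1 * 2 ^ (t - 2) * s ^ (2 - t))
          + ENNReal.ofReal (C0 * C1 * 2 ^ (t - 2) * s ^ (2 - t)) := add_le_add half half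
    _ = ENNReal.ofReal (2 * (C0 * C1 * 2 ^ (t - 2)) * s ^ (2 - t)) := by
        rw [← ENNReal.ofReal_add (by positivity) (by positivity)]
        congr 1
        ring


end DCE

open DCE

/-- Discrete convolution estimate on ℤ². -/
theorem discrete_convolution_estimate (α β : ℝ) (hab : α + β > 2) (ha : α < 2) (hb : β < 2) :
    ∃ C : ℝ, ∀ n : ℤ × ℤ,
      (∑' m : ℤ × ℤ, jap m ^ (-α) * jap (n - m) ^ (-β)) ≤ C * jap n ^ (2 - α - β) := by
  have hα0 : 0 < α := by linarith
  have hβ0 : 0 < β := by linarith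
  obtain ⟨Ca, hCa0, hCa⟩ := ball2 hα0.le ha
  obtain ⟨Cb, hCb0, hCb⟩ := ball2 hβ0.le hb
  obtain ⟨Ct, hCt0, hCt⟩ := tail2 hab
  have h2β : (0:ℝ) < 2 ^ β := Real.rpow_pos_of_pos two_pos β
  have h2α : (0:ℝ) < 2 ^ α := Real.rpow_pos_of_pos two_pos α
  refine ⟨2 ^ β * Ca + 2 ^ α * Cb + 2 * Ct, fun n => ?_⟩
  set C : ℝ := 2 ^ β * Ca + 2 ^ α * Cb + 2 * Ct with hC
  have hC0 : 0 ≤ C := by positivity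
  set r : ℝ := jap n with hrdef
  have hr1 : 1 ≤ r := one_le_jap n
  have hr0 : 0 < r := by linarith
  have hrexp : (0:ℝ) ≤ r ^ (2 - α - β) := Real.rpow_nonneg hr0.le _
  set F : ℤ × ℤ → ℝ := fun m => jap m ^ (-α) * jap (n - m) ^ (-β) with hF
  have hFnn : ∀ m, 0 ≤ F m := fun m =>
    mul_nonneg (Real.rpow_nonneg (jap_pos m).le _) (Real.rpow_nonneg (jap_pos _).le _)
  set g1 : ℤ × ℤ → ℝ := fun m => (r / 2) ^ (-β) * (if jap m ≤ r then jap m ^ (-α) else 0) with hg1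
  set g2 : ℤ × ℤ → ℝ := fun m => if r ≤ jap m then jap m ^ (-(α + β)) else 0 with hg2
  set g3 : ℤ × ℤ → ℝ := fun m =>
    (r / 2) ^ (-α) * (if jap (n - m) ≤ r then jap (n - m) ^ (-β) else 0) with hg3
  set g4 : ℤ × ℤ → ℝ := fun m => if r ≤ jap (n - m) then jap (n - m) ^ (-(α + β)) else 0 with hg4
  have hr2 : (0:ℝ) < (r / 2) ^ (-β) := Real.rpow_pos_of_pos (by positivity) _
  have hr2' : (0:ℝ) < (r / 2) ^ (-α) := Real.rpow_pos_of_pos (by positivity) _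
  have hite_nn : ∀ (P : Prop) [Decidable P] (x : ℝ), 0 ≤ x → (0:ℝ) ≤ (if P then x else 0) := by
    intro P _ x hx
    split
    · exact hx
    · exact le_rfl
  have hn1 : ∀ m, 0 ≤ g1 m := fun m => by
    simp only [hg1]
    exact mul_nonneg hr2.le (hite_nn _ _ (Real.rpow_nonneg (jap_pos m).le _))
  have hn2 : ∀ m, 0 ≤ g2 m := fun m => by
    simp only [hg2]
    exact hite_nn _ _ (Real.rpow_nonneg (jap_pos m).le _)
  have hn3 : ∀ m, 0 ≤ g3 m := fun m => by
    simp only [hg3]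
    exact mul_nonneg hr2'.le (hite_nn _ _ (Real.rpow_nonneg (jap_pos _).le _))
  have hn4 : ∀ m, 0 ≤ g4 m := fun m => by
    simp only [hg4]
    exact hite_nn _ _ (Real.rpow_nonneg (jap_pos _).le _)
  -- pointwise bound
  have hpt : ∀ m, F m ≤ g1 m + g2 m + g3 m + g4 m := by
    intro m
    have hm1 := jap_pos m
    have hm2 := jap_pos (n - m)
    rcases le_total (jap m) (jap (n - m)) with hcmp | hcmp
    · have hkey : r ≤ 2 * jap (n - m) := by
        have h := jap_add_le (x := m) (y := n - m) hcmp
        have heq : m + (n - m) = n := by abel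
        rw [heq] at h
        exact h
      rcases le_total (jap m) r with hc2 | hc2
      · have hb1 : jap (n - m) ^ (-β) ≤ (r / 2) ^ (-β) :=
          Real.rpow_le_rpow_of_nonpos (by positivity) (by linarith) (by linarith)
        have hF1 : F m ≤ g1 m := by
          simp only [hF, hg1, if_pos hc2]
          calc jap m ^ (-α) * jap (n - m) ^ (-β) ≤ jap m ^ (-α) * (r / 2) ^ (-β) :=
                mul_le_mul_of_nonneg_left hb1 (Real.rpow_nonneg hm1.le _)
            _ = (r / 2) ^ (-β) * jap m ^ (-α) := by ring
        linarith [hn2 m, hn3 m, hn4 m]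
      · have hb1 : jap (n - m) ^ (-β) ≤ jap m ^ (-β) :=
          Real.rpow_le_rpow_of_nonpos hm1 hcmp (by linarith)
        have hF2 : F m ≤ g2 m := by
          simp only [hF, hg2, if_pos hc2]
          calc jap m ^ (-α) * jap (n - m) ^ (-β) ≤ jap m ^ (-α) * jap m ^ (-β) :=
                mul_le_mul_of_nonneg_left hb1 (Real.rpow_nonneg hm1.le _)
            _ = jap m ^ (-(α + β)) := by
                rw [← Real.rpow_add hm1]
                congr 1
                ring
        linarith [hn1 m, hn3 m, hn4 m]
    · have hkey : r ≤ 2 * jap m := by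
        have h := jap_add_le (x := n - m) (y := m) hcmp
        have heq : (n - m) + m = n := by abel
        rw [heq] at h
        exact h
      rcases le_total (jap (n - m)) r with hc2 | hc2
      · have hb1 : jap m ^ (-α) ≤ (r / 2) ^ (-α) :=
          Real.rpow_le_rpow_of_nonpos (by positivity) (by linarith) (by linarith)
        have hF3 : F m ≤ g3 m := by
          simp only [hF, hg3, if_pos hc2]
          calc jap m ^ (-α) * jap (n - m) ^ (-β) ≤ (r / 2) ^ (-α) * jap (n - m) ^ (-β) :=
                mul_le_mul_of_nonneg_right hb1 (Real.rpow_nonneg hm2.le _)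
            _ = (r / 2) ^ (-α) * jap (n - m) ^ (-β) := rfl
        linarith [hn1 m, hn2 m, hn4 m]
      · have hb1 : jap m ^ (-α) ≤ jap (n - m) ^ (-α) :=
          Real.rpow_le_rpow_of_nonpos hm2 hcmp (by linarith)
        have hF4 : F m ≤ g4 m := by
          simp only [hF, hg4, if_pos hc2]
          calc jap m ^ (-α) * jap (n - m) ^ (-β) ≤ jap (n - m) ^ (-α) * jap (n - m) ^ (-β) :=
                mul_le_mul_of_nonneg_right hb1 (Real.rpow_nonneg hm2.le _)
            _ = jap (n - m) ^ (-(α + β)) := by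
                rw [← Real.rpow_add hm2]
                congr 1
                ring
        linarith [hn1 m, hn2 m, hn3 m]
  -- ENNReal bounds for each piece
  have hmulexpβ : r ^ (-β) * r ^ (2 - α) = r ^ (2 - α - β) := by
    rw [← Real.rpow_add hr0]
    congr 1
    ring
  have hmulexpα : r ^ (-α) * r ^ (2 - β) = r ^ (2 - α - β) := by
    rw [← Real.rpow_add hr0]
    congr 1
    ring
  have hhalfβ : (r / 2) ^ (-β) = 2 ^ β * r ^ (-β) := by
    rw [Real.div_rpow hr0.le (by norm_num : (0:ℝ) ≤ 2), Real.rpow_neg (by norm_num : (0:ℝ) ≤ 2)]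
    field_simp
  have hhalfα : (r / 2) ^ (-α) = 2 ^ α * r ^ (-α) := by
    rw [Real.div_rpow hr0.le (by norm_num : (0:ℝ) ≤ 2), Real.rpow_neg (by norm_num : (0:ℝ) ≤ 2)]
    field_simp
  have hS1 : ∑' m : ℤ × ℤ, ENNReal.ofReal (g1 m) ≤
      ENNReal.ofReal ((2 ^ β * Ca) * r ^ (2 - α - β)) := by
    calc ∑' m : ℤ × ℤ, ENNReal.ofReal (g1 m)
        = ENNReal.ofReal ((r / 2) ^ (-β)) *
            ∑' m : ℤ × ℤ, ENNReal.ofReal (if jap m ≤ r then jap m ^ (-α) else 0) := by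
          rw [← ENNReal.tsum_mul_left]
          apply tsum_congr
          intro m
          simp only [hg1]
          rw [← ENNReal.ofReal_mul hr2.le]
      _ ≤ ENNReal.ofReal ((r / 2) ^ (-β)) * ENNReal.ofReal (Ca * r ^ (2 - α)) :=
          mul_le_mul_right (hCa r hr1) _
      _ = ENNReal.ofReal ((2 ^ β * Ca) * r ^ (2 - α - β)) := by
          rw [← ENNReal.ofReal_mul hr2.le]
          congr 1
          rw [hhalfβ]
          calc 2 ^ β * r ^ (-β) * (Ca * r ^ (2 - α))
              = 2 ^ β * Ca * (r ^ (-β) * r ^ (2 - α)) := by ring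
            _ = 2 ^ β * Ca * r ^ (2 - α - β) := by rw [hmulexpβ]
  have hS2 : ∑' m : ℤ × ℤ, ENNReal.ofReal (g2 m) ≤
      ENNReal.ofReal (Ct * r ^ (2 - α - β)) := by
    have h := hCt r hr0
    have hexp : (2:ℝ) - (α + β) = 2 - α - β := by ring
    rw [hexp] at h
    exact h
  have hre3 : ∑' m : ℤ × ℤ, ENNReal.ofReal (if jap (n - m) ≤ r then jap (n - m) ^ (-β) else 0)
      = ∑' k : ℤ × ℤ, ENNReal.ofReal (if jap k ≤ r then jap k ^ (-β) else 0) := by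
    rw [← (Equiv.subLeft n).tsum_eq
      (fun k : ℤ × ℤ => ENNReal.ofReal (if jap k ≤ r then jap k ^ (-β) else 0))]
    apply tsum_congr
    intro m
    simp [Equiv.subLeft_apply]
  have hre4 : ∑' m : ℤ × ℤ, ENNReal.ofReal (if r ≤ jap (n - m) then jap (n - m) ^ (-(α + β)) else 0)
      = ∑' k : ℤ × ℤ, ENNReal.ofReal (if r ≤ jap k then jap k ^ (-(α + β)) else 0) := by
    rw [← (Equiv.subLeft n).tsum_eq
      (fun k : ℤ × ℤ => ENNReal.ofReal (if r ≤ jap k then jap k ^ (-(α + β)) else 0))]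
    apply tsum_congr
    intro m
    simp [Equiv.subLeft_apply]
  have hS3 : ∑' m : ℤ × ℤ, ENNReal.ofReal (g3 m) ≤
      ENNReal.ofReal ((2 ^ α * Cb) * r ^ (2 - α - β)) := by
    calc ∑' m : ℤ × ℤ, ENNReal.ofReal (g3 m)
        = ENNReal.ofReal ((r / 2) ^ (-α)) *
            ∑' m : ℤ × ℤ, ENNReal.ofReal (if jap (n - m) ≤ r then jap (n - m) ^ (-β) else 0) := by
          rw [← ENNReal.tsum_mul_left]
          apply tsum_congr
          intro m
          simp only [hg3]
          rw [← ENNReal.ofReal_mul hr2'.le]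
      _ = ENNReal.ofReal ((r / 2) ^ (-α)) *
            ∑' k : ℤ × ℤ, ENNReal.ofReal (if jap k ≤ r then jap k ^ (-β) else 0) := by rw [hre3]
      _ ≤ ENNReal.ofReal ((r / 2) ^ (-α)) * ENNReal.ofReal (Cb * r ^ (2 - β)) :=
          mul_le_mul_right (hCb r hr1) _
      _ = ENNReal.ofReal ((2 ^ α * Cb) * r ^ (2 - α - β)) := by
          rw [← ENNReal.ofReal_mul hr2'.le]
          congr 1
          rw [hhalfα]
          calc 2 ^ α * r ^ (-α) * (Cb * r ^ (2 - β))
              = 2 ^ α * Cb * (r ^ (-α) * r ^ (2 - β)) := by ring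
            _ = 2 ^ α * Cb * r ^ (2 - α - β) := by rw [hmulexpα]
  have hS4 : ∑' m : ℤ × ℤ, ENNReal.ofReal (g4 m) ≤
      ENNReal.ofReal (Ct * r ^ (2 - α - β)) := by
    have h := hCt r hr0
    have hexp : (2:ℝ) - (α + β) = 2 - α - β := by ring
    rw [hexp] at h
    calc ∑' m : ℤ × ℤ, ENNReal.ofReal (g4 m)
        = ∑' k : ℤ × ℤ, ENNReal.ofReal (if r ≤ jap k then jap k ^ (-(α + β)) else 0) := hre4
      _ ≤ ENNReal.ofReal (Ct * r ^ (2 - α - β)) := h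
  -- combine
  have hbound : ∑' m : ℤ × ℤ, ENNReal.ofReal (F m) ≤ ENNReal.ofReal (C * r ^ (2 - α - β)) := by
    calc ∑' m : ℤ × ℤ, ENNReal.ofReal (F m)
        ≤ ∑' m : ℤ × ℤ, (ENNReal.ofReal (g1 m) + ENNReal.ofReal (g2 m)
            + ENNReal.ofReal (g3 m) + ENNReal.ofReal (g4 m)) := by
          apply ENNReal.tsum_le_tsum
          intro m
          calc ENNReal.ofReal (F m) ≤ ENNReal.ofReal (g1 m + g2 m + g3 m + g4 m) :=
                ENNReal.ofReal_le_ofReal (hpt m)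
            _ = ENNReal.ofReal (g1 m) + ENNReal.ofReal (g2 m)
                + ENNReal.ofReal (g3 m) + ENNReal.ofReal (g4 m) := by
                rw [ENNReal.ofReal_add (add_nonneg (add_nonneg (hn1 m) (hn2 m)) (hn3 m)) (hn4 m),
                  ENNReal.ofReal_add (add_nonneg (hn1 m) (hn2 m)) (hn3 m),
                  ENNReal.ofReal_add (hn1 m) (hn2 m)]
      _ = (∑' m : ℤ × ℤ, ENNReal.ofReal (g1 m)) + (∑' m : ℤ × ℤ, ENNReal.ofReal (g2 m))
            + (∑' m : ℤ × ℤ, ENNReal.ofReal (g3 m)) + ∑' m : ℤ × ℤ, ENNReal.ofReal (g4 m) := by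
          rw [ENNReal.tsum_add, ENNReal.tsum_add, ENNReal.tsum_add]
      _ ≤ ENNReal.ofReal ((2 ^ β * Ca) * r ^ (2 - α - β)) + ENNReal.ofReal (Ct * r ^ (2 - α - β))
            + ENNReal.ofReal ((2 ^ α * Cb) * r ^ (2 - α - β))
            + ENNReal.ofReal (Ct * r ^ (2 - α - β)) := by
          exact add_le_add (add_le_add (add_le_add hS1 hS2) hS3) hS4
      _ = ENNReal.ofReal (C * r ^ (2 - α - β)) := by
          have k1 : (0:ℝ) ≤ (2 ^ β * Ca) * r ^ (2 - α - β) :=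
            mul_nonneg (mul_nonneg h2β.le hCa0) hrexp
          have k2 : (0:ℝ) ≤ Ct * r ^ (2 - α - β) := mul_nonneg hCt0 hrexp
          have k3 : (0:ℝ) ≤ (2 ^ α * Cb) * r ^ (2 - α - β) :=
            mul_nonneg (mul_nonneg h2α.le hCb0) hrexp
          rw [← ENNReal.ofReal_add k1 k2, ← ENNReal.ofReal_add (add_nonneg k1 k2) k3,
            ← ENNReal.ofReal_add (add_nonneg (add_nonneg k1 k2) k3) k2]
          congr 1
          rw [hC]
          ring
  -- back to the real-valued statement
  have hne : (∑' m : ℤ × ℤ, ENNReal.ofReal (F m)) ≠ ⊤ :=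
    (lt_of_le_of_lt hbound ENNReal.ofReal_lt_top).ne
  have hsumm : Summable F := by
    have h := ENNReal.summable_toReal hne
    refine (summable_congr ?_).mp h
    intro m
    rw [ENNReal.toReal_ofReal (hFnn m)]
  have hofr : ENNReal.ofReal (∑' m : ℤ × ℤ, F m) = ∑' m : ℤ × ℤ, ENNReal.ofReal (F m) :=
    ENNReal.ofReal_tsum_of_nonneg hFnn hsumm
  have hfin : ENNReal.ofReal (∑' m : ℤ × ℤ, F m) ≤ ENNReal.ofReal (C * r ^ (2 - α - β)) := by
    rw [hofr]
    exact hbound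
  exact (ENNReal.ofReal_le_ofReal_iff (mul_nonneg hC0 hrexp)).mp hfin
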